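/- Let R be a unital ring with sr(R) = n and er(R) ≤ n − 1, and let 0 → I → B → R → 0 be a unital extension with sr(I) ≤ n. Then every unimodular (n+1)-column over B whose image in R is the standard column (1,0,…,0)ᵗ lies in the relative unimodular set U_c(n+1, I), and hence is reducible over B. -/

import Mathlib

open scoped BigOperators

variable {R : Type*}

/-- A column is unimodular if its entries admit a left Bezout relation summing to `1`. -/
def Unimodular [Ring R] {m : ℕ} (b : Fin m → R) : Prop :=
  ∃ a : Fin m → R, ∑ i, a i * b i = 1

/-- An `(n+1)`-column is reducible if adding left multiples of the last entry to the first
`n` entries yields a unimodular `n`-column. -/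
def Reducible [Ring R] {n : ℕ} (b : Fin (n + 1) → R) : Prop :=
  ∃ v : Fin n → R, Unimodular (fun i : Fin n => b i.castSucc + v i * b (Fin.last n))

/-- The stable range condition: every unimodular column of length `> n` is reducible. -/
def SRleq (R : Type*) [Ring R] (n : ℕ) : Prop :=
  ∀ m : ℕ, n ≤ m → ∀ b : Fin (m + 1) → R, Unimodular b → Reducible b

/-- The Bass stable rank, as an element of `ℕ∞`. -/
noncomputable def sr (R : Type*) [Ring R] : ℕ∞ :=
  sInf {c : ℕ∞ | ∃ n : ℕ, c = n ∧ SRleq R n}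

/-- Elementary matrices (transvections). -/
def IsElemMat [Ring R] {t : ℕ} (M : Matrix (Fin t) (Fin t) R) : Prop :=
  ∃ (i j : Fin t) (c : R), i ≠ j ∧ M = 1 + Matrix.single i j c

/-- `ERleq R k` : for every `t ≥ k + 1`, the elementary group `E_t(R)` acts transitively on
unimodular `t`-columns. -/
def ERleq (R : Type*) [Ring R] (k : ℕ) : Prop :=
  ∀ t : ℕ, k + 1 ≤ t → ∀ b c : Fin t → R, Unimodular b → Unimodular c →
    ∃ L : List (Matrix (Fin t) (Fin t) R), (∀ M ∈ L, IsElemMat M) ∧ L.prod.mulVec b = c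

/-- The elementary rank, as an element of `ℕ∞`. -/
noncomputable def er (R : Type*) [Ring R] : ℕ∞ :=
  sInf {c : ℕ∞ | ∃ k : ℕ, c = k ∧ ERleq R k}

/-- Vaserstein's `I`-unimodular columns relative to a two-sided ideal `I` of `R`:
the first entry is congruent to `1` mod `I`, the others lie in `I`, and there is a Bezout
relation of the same shape. -/
def RelUnimodular [Ring R] (I : TwoSidedIdeal R) {m : ℕ} (b : Fin (m + 1) → R) : Prop :=
  b 0 - 1 ∈ I ∧ (∀ i, i ≠ 0 → b i ∈ I) ∧
    ∃ a : Fin (m + 1) → R, (a 0 - 1 ∈ I) ∧ (∀ i, i ≠ 0 → a i ∈ I) ∧ ∑ i, a i * b i = 1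

def RelReducible [Ring R] (I : TwoSidedIdeal R) {m : ℕ} (b : Fin (m + 2) → R) : Prop :=
  ∃ v : Fin (m + 1) → R, (∀ i, v i ∈ I) ∧
    RelUnimodular I (fun i : Fin (m + 1) => b i.castSucc + v i * b (Fin.last (m + 1)))

/-- Relative (Vaserstein) stable rank `≤ n` for a two-sided ideal: every `I`-unimodular
column of length at least `n + 1` is reducible. -/
def RelSRleq [Ring R] (I : TwoSidedIdeal R) (n : ℕ) : Prop :=
  ∀ m : ℕ, n ≤ m + 1 → ∀ b : Fin (m + 2) → R, RelUnimodular I b → RelReducible I b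

/-- The relative stable rank of a two-sided ideal, as an element of `ℕ∞`. -/
noncomputable def relSr [Ring R] (I : TwoSidedIdeal R) : ℕ∞ :=
  sInf {c : ℕ∞ | ∃ n : ℕ, c = n ∧ RelSRleq I n}

/-- The key step in Lemma 1.8(1): let `R` be unital with `sr(R) = n` and `er(R) ≤ n - 1`
(here `n = m + 1 ≥ 1`), and let `0 → I → B → R → 0` be a unital extension with `sr(I) ≤ n`.
Then every unimodular `(n+1)`-column over `B` whose image in `R` is the standard column
`(1,0,…,0)ᵗ` is `I`-unimodular, and hence is reducible over `B`. -/
theorem unimodular_over_kernel_reducible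
    {R B : Type*} [Ring R] [Ring B] (m : ℕ)
    (hsr : sr R = (m + 1 : ℕ)) (her : er R ≤ (m : ℕ∞))
    (f : B →+* R) (hf : Function.Surjective f)
    (hI : RelSRleq (TwoSidedIdeal.ker f) (m + 1))
    (b : Fin (m + 2) → B) (hb : Unimodular b)
    (hstd : (fun i => f (b i)) = (fun i : Fin (m + 2) => if i = 0 then 1 else 0)) :
    RelUnimodular (TwoSidedIdeal.ker f) b ∧ Reducible b := by
  have hb0 : f (b 0) = 1 := by
    have := congrFun hstd 0; simpa using this
  have hbi : ∀ i : Fin (m + 2), i ≠ 0 → f (b i) = 0 := by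
    intro i hi
    have := congrFun hstd i; simpa [hi] using this
  obtain ⟨a, ha⟩ := hb
  have hrel : RelUnimodular (TwoSidedIdeal.ker f) b := by
    refine ⟨?_, ?_, ?_⟩
    · rw [TwoSidedIdeal.mem_ker]; simp [hb0]
    · intro i hi; rw [TwoSidedIdeal.mem_ker]; exact hbi i hi
    · refine ⟨fun i => (1 - b 0) * a i + (if i = 0 then 1 else 0), ?_, ?_, ?_⟩
      · rw [TwoSidedIdeal.mem_ker]; simp [hb0]
      · intro i hi; rw [TwoSidedIdeal.mem_ker]; simp [hi, hb0]
      · have : ∑ i, ((1 - b 0) * a i + (if i = 0 then 1 else 0)) * b i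
            = ∑ i, ((1 - b 0) * (a i * b i) + (if i = 0 then b i else 0)) := by
          refine Finset.sum_congr rfl fun i _ => ?_
          by_cases h : i = 0 <;> simp [h, mul_assoc, add_mul]
        rw [this, Finset.sum_add_distrib, ← Finset.mul_sum, ha]
        simp
  refine ⟨hrel, ?_⟩
  obtain ⟨v, hvI, hu⟩ := hI m le_rfl b hrel
  obtain ⟨_, _, a', _, _, ha'⟩ := hu
  exact ⟨v, a', ha'⟩
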